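/- Let B₊ = {(x₁,x₂) ∈ ℝ² : x₁² + x₂² < 1, x₁ ≥ 0} be the closed right half-disk and let V be a homeomorphic image of B₊ inside the unit disk B(0,1) with the boundary diameter mapped into itself fixing 0 appropriately. For every sufficiently small r > 0, among the connected components of V ∩ ∂B(0,r) there exists an arc σ_r whose two endpoints lie on the images of the lower and upper radii {−t e₂ : 0 < t < 1} and {t e₂ : 0 < t < 1} respectively; otherwise the connected component of V ∩ B(0,r) whose boundary contains the origin would meet the arc {e^{iθ}/2 : |θ| ≤ π/2}, which is impossible. -/

import Mathlib

open Set Real Complex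

/-- The open half-disk `B₊(0,1) = {z : |z| < 1, Re z ≥ 0}` (identifying `ℝ²` with `ℂ`;
the first coordinate `x₁` is the real part). -/
def halfDisk : Set ℂ := {z : ℂ | ‖z‖ < 1 ∧ 0 ≤ z.re}

/-- The lower radius `{-t·e₂ : 0 < t < 1}` of the half-disk. -/
def lowerRadius : Set ℂ := {z : ℂ | ∃ t : ℝ, 0 < t ∧ t < 1 ∧ z = -(t : ℂ) * Complex.I}

/-- The upper radius `{t·e₂ : 0 < t < 1}` of the half-disk. -/
def upperRadius : Set ℂ := {z : ℂ | ∃ t : ℝ, 0 < t ∧ t < 1 ∧ z = (t : ℂ) * Complex.I}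


section St17Aux
open Finset

def st17Sq : Set (ℝ×ℝ) := (Icc (0:ℝ) 1) ×ˢ (Icc (0:ℝ) 1)

lemma st17_zmod2_telescope (a : ℕ → ZMod 2) (N : ℕ) :
    ∑ j ∈ Finset.range N, (a j + a (j+1)) = a 0 + a N := by
  have h : ∀ j, a j + a (j+1) = a (j+1) - a j := by
    intro j; rw [CharTwo.sub_eq_add]; ring
  rw [Finset.sum_congr rfl (fun j _ => h j), Finset.sum_range_sub, CharTwo.sub_eq_add]
  ring

def st17b (u w : Fin 3) : ZMod 2 := if (u = 0 ∧ w = 1) ∨ (u = 1 ∧ w = 0) then 1 else 0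

def st17m (u : Fin 3) : ZMod 2 := if u = 1 then 1 else 0

lemma st17b_complete : ∀ u v w : Fin 3, st17b u v + st17b v w + st17b u w = 1 →
    (u = 0 ∨ v = 0 ∨ w = 0) ∧ (u = 1 ∨ v = 1 ∨ w = 1) ∧ (u = 2 ∨ v = 2 ∨ w = 2) := by decide

lemma st17b_no0 : ∀ u w : Fin 3, u ≠ 0 → w ≠ 0 → st17b u w = 0 := by decide
lemma st17b_no1 : ∀ u w : Fin 3, u ≠ 1 → w ≠ 1 → st17b u w = 0 := by decide
lemma st17b_m : ∀ u w : Fin 3, u ≠ 2 → w ≠ 2 → st17b u w = st17m u + st17m w := by decide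
lemma st17_fin3_cases : ∀ u : Fin 3, u ≠ 1 → u ≠ 2 → u = 0 := by decide

open scoped Classical in
noncomputable def st17lab (f g : ℝ×ℝ → ℝ) (N i j : ℕ) : Fin 3 :=
  if 0 < f ((i:ℝ)/N, (j:ℝ)/N) then 1
  else if g ((i:ℝ)/N, (j:ℝ)/N) < 0 then 2 else 0

lemma st17lab_spec1 (f g : ℝ×ℝ → ℝ) (N i j : ℕ) (h : st17lab f g N i j = 1) :
    0 < f ((i:ℝ)/N, (j:ℝ)/N) := by
  unfold st17lab at h; split_ifs at h with h1 h2 <;> first | exact h1 | simp at h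

lemma st17lab_spec0 (f g : ℝ×ℝ → ℝ) (N i j : ℕ) (h : st17lab f g N i j = 0) :
    f ((i:ℝ)/N, (j:ℝ)/N) ≤ 0 ∧ 0 ≤ g ((i:ℝ)/N, (j:ℝ)/N) := by
  unfold st17lab at h; split_ifs at h with h1 h2 <;>
    first | exact ⟨le_of_not_gt h1, le_of_not_gt h2⟩ | simp at h

lemma st17lab_spec2 (f g : ℝ×ℝ → ℝ) (N i j : ℕ) (h : st17lab f g N i j = 2) :
    g ((i:ℝ)/N, (j:ℝ)/N) < 0 := by
  unfold st17lab at h; split_ifs at h with h1 h2 <;> first | exact h2 | simp at h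
-- "spec" of a label at a point
def st17spec (f g : ℝ×ℝ → ℝ) (u : Fin 3) (p : ℝ×ℝ) : Prop :=
  (u = 0 → f p ≤ 0 ∧ 0 ≤ g p) ∧ (u = 1 → 0 < f p) ∧ (u = 2 → g p < 0)

lemma st17_triangle_pick (f g : ℝ×ℝ → ℝ) (d : ℝ) (hd : 0 ≤ d) (A B C : ℝ×ℝ)
    (u v w : Fin 3)
    (hA : A ∈ st17Sq) (hB : B ∈ st17Sq) (hC : C ∈ st17Sq)
    (dAB : dist A B ≤ d) (dAC : dist A C ≤ d) (dBC : dist B C ≤ d)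
    (hu : st17spec f g u A) (hv : st17spec f g v B) (hw : st17spec f g w C)
    (hsum : st17b u v + st17b v w + st17b u w = 1) :
    ∃ p0 p1 p2 : ℝ×ℝ, p0 ∈ st17Sq ∧ dist p1 p0 ≤ d ∧ dist p2 p0 ≤ d ∧
      f p0 ≤ 0 ∧ 0 ≤ g p0 ∧ 0 < f p1 ∧ g p2 < 0 := by
  obtain ⟨h0, h1, h2⟩ := st17b_complete u v w hsum
  have hdist : ∀ p ∈ ({A, B, C} : Set (ℝ×ℝ)), ∀ q ∈ ({A, B, C} : Set (ℝ×ℝ)),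
      dist p q ≤ d := by
    intro p hp q hq
    rcases hp with rfl | rfl | rfl <;> rcases hq with rfl | rfl | rfl <;>
      simp_all [dist_comm, dist_self]
  have hmem : ∀ p ∈ ({A, B, C} : Set (ℝ×ℝ)), p ∈ st17Sq := by
    intro p hp; rcases hp with rfl | rfl | rfl <;> assumption
  have e0 : ∃ p ∈ ({A, B, C} : Set (ℝ×ℝ)), f p ≤ 0 ∧ 0 ≤ g p := by
    rcases h0 with h | h | h
    · exact ⟨A, by simp, hu.1 h⟩
    · exact ⟨B, by simp, hv.1 h⟩
    · exact ⟨C, by simp, hw.1 h⟩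
  have e1 : ∃ p ∈ ({A, B, C} : Set (ℝ×ℝ)), 0 < f p := by
    rcases h1 with h | h | h
    · exact ⟨A, by simp, hu.2.1 h⟩
    · exact ⟨B, by simp, hv.2.1 h⟩
    · exact ⟨C, by simp, hw.2.1 h⟩
  have e2 : ∃ p ∈ ({A, B, C} : Set (ℝ×ℝ)), g p < 0 := by
    rcases h2 with h | h | h
    · exact ⟨A, by simp, hu.2.2 h⟩
    · exact ⟨B, by simp, hv.2.2 h⟩
    · exact ⟨C, by simp, hw.2.2 h⟩
  obtain ⟨p0, hp0m, hp0⟩ := e0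
  obtain ⟨p1, hp1m, hp1⟩ := e1
  obtain ⟨p2, hp2m, hp2⟩ := e2
  exact ⟨p0, p1, p2, hmem p0 hp0m, hdist p1 hp1m p0 hp0m, hdist p2 hp2m p0 hp0m,
    hp0.1, hp0.2, hp1, hp2⟩
lemma st17_grid_step (f g : ℝ×ℝ → ℝ) (N : ℕ) (hN : 0 < N)
    (hleft : ∀ y ∈ Icc (0:ℝ) 1, f (0, y) < 0)
    (hright : ∀ y ∈ Icc (0:ℝ) 1, 0 < f (1, y))
    (hbot : ∀ x ∈ Icc (0:ℝ) 1, 0 < g (x, 0))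
    (htop : ∀ x ∈ Icc (0:ℝ) 1, g (x, 1) < 0) :
    ∃ p0 p1 p2 : ℝ×ℝ, p0 ∈ st17Sq ∧ dist p1 p0 ≤ 1/N ∧ dist p2 p0 ≤ 1/N ∧
      f p0 ≤ 0 ∧ 0 ≤ g p0 ∧ 0 < f p1 ∧ g p2 < 0 := by
  have hNR : (0:ℝ) < N := by exact_mod_cast hN
  set v : ℕ → ℕ → ℝ×ℝ := fun i j => ((i:ℝ)/N, (j:ℝ)/N) with hv
  set L : ℕ → ℕ → Fin 3 := fun i j => st17lab f g N i j with hL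
  have hNN : ((N:ℝ))/N = 1 := div_self hNR.ne'
  have hcoord : ∀ i : ℕ, i ≤ N → (i:ℝ)/N ∈ Icc (0:ℝ) 1 := by
    intro i hi
    constructor
    · positivity
    · rw [div_le_one hNR]; exact_mod_cast hi
  have hvmem : ∀ i j : ℕ, i ≤ N → j ≤ N → v i j ∈ st17Sq := by
    intro i j hi hj; exact ⟨hcoord i hi, hcoord j hj⟩
  have hdist1 : ∀ a a' : ℕ, a ≤ a' → a' ≤ a + 1 → dist ((a:ℝ)/N) ((a':ℝ)/N) ≤ 1/N := by
    intro a a' h1 h2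
    rw [Real.dist_eq, _root_.abs_sub_comm, _root_.abs_of_nonneg (by
      apply sub_nonneg.2; gcongr)]
    rw [div_sub_div_same, div_le_div_iff₀ hNR hNR]
    have : (a':ℝ) - a ≤ 1 := by
      have : (a':ℝ) ≤ a + 1 := by exact_mod_cast h2
      linarith
    nlinarith
  have hvdist : ∀ i j i' j' : ℕ, i ≤ i' → i' ≤ i + 1 → j ≤ j' → j' ≤ j + 1 →
      dist (v i j) (v i' j') ≤ 1/N := by
    intro i j i' j' a b c d
    rw [Prod.dist_eq]
    exact max_le (hdist1 i i' a b) (hdist1 j j' c d)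
  have hspec : ∀ i j : ℕ, st17spec f g (L i j) (v i j) :=
    fun i j => ⟨st17lab_spec0 f g N i j, st17lab_spec1 f g N i j, st17lab_spec2 f g N i j⟩
  -- boundary label facts
  have hbot_ne2 : ∀ i : ℕ, i ≤ N → L i 0 ≠ 2 := by
    intro i hi h
    have := st17lab_spec2 f g N i 0 h
    have h2 := hbot _ (hcoord i hi)
    simp only [Nat.cast_zero, zero_div] at this
    linarith
  have htop_ne0 : ∀ i : ℕ, i ≤ N → L i N ≠ 0 := by
    intro i hi h
    have := (st17lab_spec0 f g N i N h).2
    have h2 := htop _ (hcoord i hi)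
    rw [hNN] at this
    linarith
  have hleft_ne1 : ∀ j : ℕ, j ≤ N → L 0 j ≠ 1 := by
    intro j hj h
    have := st17lab_spec1 f g N 0 j h
    have h2 := hleft _ (hcoord j hj)
    simp only [Nat.cast_zero, zero_div] at this
    linarith
  have hright_eq1 : ∀ j : ℕ, j ≤ N → L N j = 1 := by
    intro j hj
    show st17lab f g N N j = 1
    unfold st17lab
    rw [if_pos]
    rw [hNN]
    exact hright _ (hcoord j hj)
  -- edge indicators
  set bH : ℕ → ℕ → ZMod 2 := fun i j => st17b (L i j) (L (i+1) j) with hbH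
  set bV : ℕ → ℕ → ZMod 2 := fun i j => st17b (L i j) (L i (j+1)) with hbV
  set bD : ℕ → ℕ → ZMod 2 := fun i j => st17b (L i j) (L (i+1) (j+1)) with hbD
  -- the total sum
  have key : ∑ i ∈ range N, ∑ j ∈ range N,
      ((bH i j + bV (i+1) j + bD i j) + (bV i j + bH i (j+1) + bD i j)) = 1 := by
    have hterm : ∀ i j : ℕ,
        (bH i j + bV (i+1) j + bD i j) + (bV i j + bH i (j+1) + bD i j)
          = (bH i j + bH i (j+1)) + (bV i j + bV (i+1) j) := by
      intro i j
      have : bD i j + bD i j = 0 := CharTwo.add_self_eq_zero _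
      linear_combination this
    calc ∑ i ∈ range N, ∑ j ∈ range N,
          ((bH i j + bV (i+1) j + bD i j) + (bV i j + bH i (j+1) + bD i j))
        = ∑ i ∈ range N, ∑ j ∈ range N,
          ((bH i j + bH i (j+1)) + (bV i j + bV (i+1) j)) := by
          exact Finset.sum_congr rfl fun i _ => Finset.sum_congr rfl fun j _ => hterm i j
      _ = (∑ i ∈ range N, ∑ j ∈ range N, (bH i j + bH i (j+1)))
          + (∑ i ∈ range N, ∑ j ∈ range N, (bV i j + bV (i+1) j)) := by
          rw [← Finset.sum_add_distrib]
          exact Finset.sum_congr rfl fun i _ => Finset.sum_add_distrib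
      _ = (∑ i ∈ range N, (bH i 0 + bH i N))
          + (∑ j ∈ range N, (bV 0 j + bV N j)) := by
          congr 1
          · exact Finset.sum_congr rfl fun i _ => st17_zmod2_telescope (fun j => bH i j) N
          · rw [Finset.sum_comm]
            exact Finset.sum_congr rfl fun j _ => st17_zmod2_telescope (fun i => bV i j) N
      _ = 1 := by
          have e1 : ∑ i ∈ range N, (bH i 0 + bH i N) = ∑ i ∈ range N, bH i 0 := by
            apply Finset.sum_congr rfl
            intro i hi
            rw [Finset.mem_range] at hi
            have : bH i N = 0 :=
              st17b_no0 _ _ (htop_ne0 i (le_of_lt hi)) (htop_ne0 (i+1) hi)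
            rw [this, add_zero]
          have e2 : ∑ i ∈ range N, bH i 0 = 1 := by
            have hc2 : ∀ i ∈ range N, bH i 0 = st17m (L i 0) + st17m (L (i+1) 0) := by
              intro i hi
              rw [Finset.mem_range] at hi
              exact st17b_m _ _ (hbot_ne2 i (le_of_lt hi)) (hbot_ne2 (i+1) hi)
            have hL00 : L 0 0 = 0 :=
              st17_fin3_cases _ (hleft_ne1 0 (Nat.zero_le N)) (hbot_ne2 0 (Nat.zero_le N))
            have hLN0 : L N 0 = 1 := hright_eq1 0 (Nat.zero_le N)
            calc ∑ i ∈ range N, bH i 0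
                = ∑ i ∈ range N, (st17m (L i 0) + st17m (L (i+1) 0)) :=
                  Finset.sum_congr rfl hc2
              _ = st17m (L 0 0) + st17m (L N 0) :=
                  st17_zmod2_telescope (fun k => st17m (L k 0)) N
              _ = 1 := by rw [hL00, hLN0]; decide
          have e3 : ∑ j ∈ range N, (bV 0 j + bV N j) = 0 := by
            apply Finset.sum_eq_zero
            intro j hj
            rw [Finset.mem_range] at hj
            have z1 : bV 0 j = 0 :=
              st17b_no1 _ _ (hleft_ne1 j (le_of_lt hj)) (hleft_ne1 (j+1) hj)
            have z2 : bV N j = 0 := by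
              show st17b (L N j) (L N (j+1)) = 0
              rw [hright_eq1 j (le_of_lt hj), hright_eq1 (j+1) hj]
              decide
            rw [z1, z2, add_zero]
          rw [e1, e2, e3, add_zero]
  -- extract a nonzero term
  have hex : ∃ i ∈ range N, ∃ j ∈ range N,
      ((bH i j + bV (i+1) j + bD i j) + (bV i j + bH i (j+1) + bD i j)) ≠ 0 := by
    by_contra hc
    push_neg at hc
    rw [Finset.sum_eq_zero (fun i hi => Finset.sum_eq_zero (fun j hj => hc i hi j hj))] at key
    exact zero_ne_one key
  obtain ⟨i, hi, j, hj, hne⟩ := hex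
  rw [Finset.mem_range] at hi
  rw [Finset.mem_range] at hj
  have hcase : (bH i j + bV (i+1) j + bD i j) = 1 ∨ (bV i j + bH i (j+1) + bD i j) = 1 := by
    by_contra hc
    push_neg at hc
    have c1 : (bH i j + bV (i+1) j + bD i j) = 0 := by
      by_contra h; exact hc.1 ((by decide : ∀ x : ZMod 2, x ≠ 0 → x = 1) _ h)
    have c2 : (bV i j + bH i (j+1) + bD i j) = 0 := by
      by_contra h; exact hc.2 ((by decide : ∀ x : ZMod 2, x ≠ 0 → x = 1) _ h)
    rw [c1, c2, add_zero] at hne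
    exact hne rfl
  rcases hcase with hc | hc
  · -- lower triangle (i,j), (i+1,j), (i+1,j+1)
    exact st17_triangle_pick f g (1/N) (by positivity) (v i j) (v (i+1) j) (v (i+1) (j+1))
      (L i j) (L (i+1) j) (L (i+1) (j+1))
      (hvmem i j (le_of_lt hi) (le_of_lt hj)) (hvmem (i+1) j hi (le_of_lt hj))
      (hvmem (i+1) (j+1) hi hj)
      (hvdist i j (i+1) j (Nat.le_succ i) (le_refl _) (le_refl j) (Nat.le_succ j))
      (hvdist i j (i+1) (j+1) (Nat.le_succ i) (le_refl _) (Nat.le_succ j) (le_refl _))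
      (hvdist (i+1) j (i+1) (j+1) (le_refl _) (Nat.le_succ _) (Nat.le_succ j) (le_refl _))
      (hspec i j) (hspec (i+1) j) (hspec (i+1) (j+1)) hc
  · -- upper triangle (i,j), (i,j+1), (i+1,j+1)
    exact st17_triangle_pick f g (1/N) (by positivity) (v i j) (v i (j+1)) (v (i+1) (j+1))
      (L i j) (L i (j+1)) (L (i+1) (j+1))
      (hvmem i j (le_of_lt hi) (le_of_lt hj)) (hvmem i (j+1) (le_of_lt hi) hj)
      (hvmem (i+1) (j+1) hi hj)
      (hvdist i j i (j+1) (le_refl _) (Nat.le_succ _) (Nat.le_succ j) (le_refl _))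
      (hvdist i j (i+1) (j+1) (Nat.le_succ i) (le_refl _) (Nat.le_succ j) (le_refl _))
      (hvdist i (j+1) (i+1) (j+1) (Nat.le_succ i) (le_refl _) (le_refl _) (Nat.le_succ _))
      (hspec i j) (hspec i (j+1)) (hspec (i+1) (j+1)) hc
open Filter Topology in
lemma st17_miranda (f g : ℝ×ℝ → ℝ) (hf : Continuous f) (hg : Continuous g)
    (hleft : ∀ y ∈ Icc (0:ℝ) 1, f (0, y) < 0)
    (hright : ∀ y ∈ Icc (0:ℝ) 1, 0 < f (1, y))
    (hbot : ∀ x ∈ Icc (0:ℝ) 1, 0 < g (x, 0))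
    (htop : ∀ x ∈ Icc (0:ℝ) 1, g (x, 1) < 0) :
    ∃ z ∈ st17Sq, f z = 0 ∧ g z = 0 := by
  have H : ∀ n : ℕ, ∃ p0 p1 p2 : ℝ×ℝ, p0 ∈ st17Sq ∧
      dist p1 p0 ≤ 1/((n:ℝ)+1) ∧ dist p2 p0 ≤ 1/((n:ℝ)+1) ∧
      f p0 ≤ 0 ∧ 0 ≤ g p0 ∧ 0 < f p1 ∧ g p2 < 0 := by
    intro n
    have := st17_grid_step f g (n+1) (Nat.succ_pos n) hleft hright hbot htop
    simpa using this
  choose p0 p1 p2 hmem hd1 hd2 hf0 hg0 hf1 hg2 using H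
  have hSq : IsCompact st17Sq := isCompact_Icc.prod isCompact_Icc
  obtain ⟨a, haS, φ, hφ, hconv⟩ := hSq.tendsto_subseq hmem
  have hbound : Tendsto (fun n : ℕ => 1/((φ n : ℝ)+1)) atTop (𝓝 0) := by
    apply squeeze_zero (fun n => by positivity) (g := fun n : ℕ => 1/((n:ℝ)+1))
    · intro n
      gcongr
      exact_mod_cast hφ.le_apply
    · exact tendsto_one_div_add_atTop_nhds_zero_nat
  have hda : Tendsto (fun n => dist (p0 (φ n)) a) atTop (𝓝 0) := by
    have := hconv.dist (tendsto_const_nhds (x := a))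
    simpa using this
  have hconv1 : Tendsto (fun n => p1 (φ n)) atTop (𝓝 a) := by
    rw [tendsto_iff_dist_tendsto_zero]
    apply squeeze_zero (fun n => dist_nonneg)
      (g := fun n => 1/((φ n : ℝ)+1) + dist (p0 (φ n)) a)
    · intro n
      calc dist (p1 (φ n)) a ≤ dist (p1 (φ n)) (p0 (φ n)) + dist (p0 (φ n)) a :=
            dist_triangle _ _ _
        _ ≤ 1/((φ n : ℝ)+1) + dist (p0 (φ n)) a := by
            have := hd1 (φ n); gcongr
    · simpa using hbound.add hda
  have hconv2 : Tendsto (fun n => p2 (φ n)) atTop (𝓝 a) := by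
    rw [tendsto_iff_dist_tendsto_zero]
    apply squeeze_zero (fun n => dist_nonneg)
      (g := fun n => 1/((φ n : ℝ)+1) + dist (p0 (φ n)) a)
    · intro n
      calc dist (p2 (φ n)) a ≤ dist (p2 (φ n)) (p0 (φ n)) + dist (p0 (φ n)) a :=
            dist_triangle _ _ _
        _ ≤ 1/((φ n : ℝ)+1) + dist (p0 (φ n)) a := by
            have := hd2 (φ n); gcongr
    · simpa using hbound.add hda
  have hfa_le : f a ≤ 0 :=
    le_of_tendsto (hf.continuousAt.tendsto.comp hconv) (Eventually.of_forall fun n => hf0 _)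
  have hfa_ge : 0 ≤ f a :=
    ge_of_tendsto (hf.continuousAt.tendsto.comp hconv1)
      (Eventually.of_forall fun n => (hf1 _).le)
  have hga_ge : 0 ≤ g a :=
    ge_of_tendsto (hg.continuousAt.tendsto.comp hconv) (Eventually.of_forall fun n => hg0 _)
  have hga_le : g a ≤ 0 :=
    le_of_tendsto (hg.continuousAt.tendsto.comp hconv2)
      (Eventually.of_forall fun n => (hg2 _).le)
  exact ⟨a, haS, le_antisymm hfa_le hfa_ge, le_antisymm hga_le hga_ge⟩
lemma st17_sep {X : Type*} [TopologicalSpace X] [CompactSpace X] [T2Space X]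
    (A B : Set X) (hA : IsClosed A) (hB : IsClosed B)
    (h : ∀ C : Set X, IsPreconnected C → (C ∩ A).Nonempty → (C ∩ B).Nonempty → False) :
    ∃ W : Set X, IsClopen W ∧ A ⊆ W ∧ W ∩ B = ∅ := by
  -- for every a ∈ A there is a clopen neighborhood disjoint from B
  have step : ∀ a ∈ A, ∃ W : Set X, IsClopen W ∧ a ∈ W ∧ W ∩ B = ∅ := by
    intro a ha
    have hcomp : connectedComponent a ∩ B = ∅ := by
      by_contra hc
      exact h (connectedComponent a) isPreconnected_connectedComponent
        ⟨a, mem_connectedComponent, ha⟩ (nonempty_iff_ne_empty.2 hc)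
    have heq := connectedComponent_eq_iInter_isClopen a
    have hBint : (B ∩ ⋂ s : { s : Set X // IsClopen s ∧ a ∈ s }, (s : Set X)) = ∅ := by
      rw [← heq, Set.inter_comm]; exact hcomp
    obtain ⟨t, ht⟩ := (hB.isCompact).elim_finite_subfamily_closed
      (fun s : { s : Set X // IsClopen s ∧ a ∈ s } => (s : Set X))
      (fun s => s.2.1.1) hBint
    refine ⟨⋂ s ∈ t, (s : Set X), isClopen_biInter_finset (fun s _ => s.2.1), ?_, ?_⟩
    · exact Set.mem_iInter₂.2 fun s _ => s.2.2
    · rw [Set.inter_comm]; exact ht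
  choose! W hWclopen hWmem hWB using step
  -- A is compact, covered by the W a
  have hAcomp : IsCompact A := hA.isCompact
  have hcover : A ⊆ ⋃ a ∈ A, W a := fun a ha => Set.mem_biUnion ha (hWmem a ha)
  obtain ⟨t, htA, htfin, htcover⟩ := hAcomp.elim_finite_subcover_image
    (fun a ha => (hWclopen a ha).2) hcover
  refine ⟨⋃ a ∈ t, W a, ?_, ?_, ?_⟩
  · exact htfin.isClopen_biUnion (fun a ha => hWclopen a (htA ha))
  · exact htcover
  · apply Set.eq_empty_of_forall_notMem
    rintro x ⟨hx1, hx2⟩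
    obtain ⟨a, ha, hxa⟩ := Set.mem_iUnion₂.1 hx1
    exact absurd (Set.mem_inter hxa hx2) (by rw [hWB a (htA ha)]; exact not_false)
lemma st17_sep' (F A B : Set (ℝ×ℝ)) (hF : IsCompact F) (hAF : A ⊆ F) (hBF : B ⊆ F)
    (hA : IsClosed A) (hB : IsClosed B)
    (h : ∀ C : Set (ℝ×ℝ), C ⊆ F → IsPreconnected C →
      (C ∩ A).Nonempty → (C ∩ B).Nonempty → False) :
    ∃ P Q : Set (ℝ×ℝ), P ∪ Q = F ∧ Disjoint P Q ∧ IsCompact P ∧ IsCompact Q ∧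
      A ⊆ P ∧ B ⊆ Q := by
  haveI : CompactSpace ↥F := isCompact_iff_compactSpace.1 hF
  set A' : Set ↥F := Subtype.val ⁻¹' A with hA'
  set B' : Set ↥F := Subtype.val ⁻¹' B with hB'
  have hsub : ∀ C' : Set ↥F, IsPreconnected C' → (C' ∩ A').Nonempty →
      (C' ∩ B').Nonempty → False := by
    intro C' hC' hCA hCB
    apply h (Subtype.val '' C') (Subtype.coe_image_subset F C')
      (hC'.image _ continuous_subtype_val.continuousOn)
    · obtain ⟨x, hxC, hxA⟩ := hCA
      exact ⟨x, Set.mem_image_of_mem _ hxC, hxA⟩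
    · obtain ⟨x, hxC, hxB⟩ := hCB
      exact ⟨x, Set.mem_image_of_mem _ hxC, hxB⟩
  obtain ⟨W, hWclopen, hAW, hWB⟩ := st17_sep A' B'
    (hA.preimage continuous_subtype_val) (hB.preimage continuous_subtype_val) hsub
  refine ⟨Subtype.val '' W, Subtype.val '' Wᶜ, ?_, ?_, ?_, ?_, ?_, ?_⟩
  · rw [← Set.image_union, Set.union_compl_self, Subtype.coe_image_univ]
  · exact (Set.disjoint_image_iff Subtype.val_injective).2 disjoint_compl_right
  · exact (hWclopen.1.isCompact).image continuous_subtype_val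
  · exact (hWclopen.compl.1.isCompact).image continuous_subtype_val
  · intro a ha
    exact ⟨⟨a, hAF ha⟩, hAW ha, rfl⟩
  · intro b hb
    refine ⟨⟨b, hBF hb⟩, ?_, rfl⟩
    intro hbW
    exact absurd (Set.mem_inter hbW hb) (by rw [hWB]; exact not_false)

lemma st17_cross (h : ℝ×ℝ → ℝ) (r : ℝ) (hh : Continuous h)
    (hleft : ∀ y ∈ Icc (0:ℝ) 1, h (0, y) < r)
    (hright : ∀ y ∈ Icc (0:ℝ) 1, r < h (1, y)) :
    ∃ E : Set (ℝ×ℝ), E ⊆ st17Sq ∧ (∀ p ∈ E, h p = r) ∧ IsConnected E ∧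
      (∃ p ∈ E, p.2 = 0) ∧ (∃ p ∈ E, p.2 = 1) := by
  by_contra hc
  set F : Set (ℝ×ℝ) := {p | p ∈ st17Sq ∧ h p = r} with hFdef
  set top : Set (ℝ×ℝ) := {p | p ∈ st17Sq ∧ p.2 = 1} with htopdef
  set bot : Set (ℝ×ℝ) := {p | p ∈ st17Sq ∧ p.2 = 0} with hbotdef
  have hSqc : IsCompact st17Sq := isCompact_Icc.prod isCompact_Icc
  have hSqcl : IsClosed st17Sq := isClosed_Icc.prod isClosed_Icc
  have hFc : IsCompact F := by
    have : F = st17Sq ∩ h ⁻¹' {r} := by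
      ext p; simp [hFdef, Set.mem_inter_iff]
    rw [this]
    exact hSqc.inter_right ((isClosed_singleton).preimage hh)
  have htopcl : IsClosed top := by
    have : top = st17Sq ∩ {p : ℝ×ℝ | p.2 = 1} := by ext p; simp [htopdef]
    rw [this]
    exact hSqcl.inter (isClosed_eq continuous_snd continuous_const)
  have hbotcl : IsClosed bot := by
    have : bot = st17Sq ∩ {p : ℝ×ℝ | p.2 = 0} := by ext p; simp [hbotdef]
    rw [this]
    exact hSqcl.inter (isClosed_eq continuous_snd continuous_const)
  have hnc : ∀ C : Set (ℝ×ℝ), C ⊆ F → IsPreconnected C →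
      (C ∩ (F ∩ top)).Nonempty → (C ∩ (F ∩ bot)).Nonempty → False := by
    intro C hCF hCp hCA hCB
    obtain ⟨x, hxC, _, _, hx1⟩ := hCA
    obtain ⟨y, hyC, _, _, hy0⟩ := hCB
    exact hc ⟨C, fun p hp => (hCF hp).1, fun p hp => (hCF hp).2, ⟨⟨x, hxC⟩, hCp⟩,
      ⟨y, hyC, hy0⟩, ⟨x, hxC, hx1⟩⟩
  obtain ⟨P, Q, hPQ, hdisj, hPc, hQc, hAP, hBQ⟩ := st17_sep' F (F ∩ top) (F ∩ bot) hFc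
    Set.inter_subset_left Set.inter_subset_left
    (hFc.isClosed.inter htopcl) (hFc.isClosed.inter hbotcl) hnc
  -- Poincaré–Miranda contradiction
  set f₁ : ℝ×ℝ → ℝ := fun p => h p - r with hf₁
  set f₂ : ℝ×ℝ → ℝ := fun p => Metric.infDist p (P ∪ top) - Metric.infDist p (Q ∪ bot)
    with hf₂
  have hPcl : IsClosed (P ∪ top) := hPc.isClosed.union htopcl
  have hQcl : IsClosed (Q ∪ bot) := hQc.isClosed.union hbotcl
  have hPne : (P ∪ top).Nonempty := ⟨(0, 1), Or.inr ⟨⟨⟨le_refl 0, zero_le_one⟩,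
    ⟨zero_le_one, le_refl 1⟩⟩, rfl⟩⟩
  have hQne : (Q ∪ bot).Nonempty := ⟨(0, 0), Or.inr ⟨⟨⟨le_refl 0, zero_le_one⟩,
    ⟨le_refl 0, zero_le_one⟩⟩, rfl⟩⟩
  obtain ⟨z, hzS, hz1, hz2⟩ := st17_miranda f₁ f₂ ((hh.sub continuous_const))
    ((Metric.continuous_infDist_pt _).sub (Metric.continuous_infDist_pt _))
    (fun y hy => by simpa [hf₁] using sub_neg.2 (hleft y hy))
    (fun y hy => by simpa [hf₁] using sub_pos.2 (hright y hy))
    (by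
      intro x hx
      have hmem : ((x:ℝ), (0:ℝ)) ∈ Q ∪ bot := Or.inr ⟨⟨hx, le_refl 0, zero_le_one⟩, rfl⟩
      have h2 : Metric.infDist ((x:ℝ), (0:ℝ)) (Q ∪ bot) = 0 :=
        Metric.infDist_zero_of_mem hmem
      have h1 : 0 < Metric.infDist ((x:ℝ), (0:ℝ)) (P ∪ top) := by
        rw [← hPcl.notMem_iff_infDist_pos hPne]
        rintro (hP | htp)
        · have hzF : ((x:ℝ), (0:ℝ)) ∈ F := by rw [← hPQ]; exact Or.inl hP
          have : ((x:ℝ), (0:ℝ)) ∈ Q := hBQ ⟨hzF, ⟨hzF.1, rfl⟩⟩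
          exact Set.disjoint_left.1 hdisj hP this
        · exact one_ne_zero htp.2.symm
      simp only [hf₂]
      rw [h2]
      linarith)
    (by
      intro x hx
      have hmem : ((x:ℝ), (1:ℝ)) ∈ P ∪ top := Or.inr ⟨⟨hx, zero_le_one, le_refl 1⟩, rfl⟩
      have h1 : Metric.infDist ((x:ℝ), (1:ℝ)) (P ∪ top) = 0 :=
        Metric.infDist_zero_of_mem hmem
      have h2 : 0 < Metric.infDist ((x:ℝ), (1:ℝ)) (Q ∪ bot) := by
        rw [← hQcl.notMem_iff_infDist_pos hQne]
        rintro (hQ | hbt)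
        · have hzF : ((x:ℝ), (1:ℝ)) ∈ F := by rw [← hPQ]; exact Or.inr hQ
          have : ((x:ℝ), (1:ℝ)) ∈ P := hAP ⟨hzF, ⟨hzF.1, rfl⟩⟩
          exact Set.disjoint_left.1 hdisj this hQ
        · exact one_ne_zero hbt.2
      simp only [hf₂]
      rw [h1]
      linarith)
  have hzF : z ∈ F := ⟨hzS, by simpa [hf₁, sub_eq_zero] using hz1⟩
  have hzPQ : z ∈ P ∪ Q := by rw [hPQ]; exact hzF
  simp only [hf₂, sub_eq_zero] at hz2
  rcases hzPQ with hzP | hzQ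
  · have e1 : Metric.infDist z (P ∪ top) = 0 := Metric.infDist_zero_of_mem (Or.inl hzP)
    have e2 : z ∈ Q ∪ bot := by
      rw [hQcl.mem_iff_infDist_zero hQne, ← hz2, e1]
    rcases e2 with hzQ | hzbot
    · exact Set.disjoint_left.1 hdisj hzP hzQ
    · have : z ∈ Q := hBQ ⟨hzF, hzbot⟩
      exact Set.disjoint_left.1 hdisj hzP this
  · have e1 : Metric.infDist z (Q ∪ bot) = 0 := Metric.infDist_zero_of_mem (Or.inl hzQ)
    have e2 : z ∈ P ∪ top := by
      rw [hPcl.mem_iff_infDist_zero hPne, hz2, e1]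
    rcases e2 with hzP | hztop
    · exact Set.disjoint_left.1 hdisj hzP hzQ
    · have : z ∈ P := hAP ⟨hzF, hztop⟩
      exact Set.disjoint_left.1 hdisj this hzQ

end St17Aux

/-- the topological lemma in the proof of Theorem 1: let `f` map the
half-disk `B₊` homeomorphically onto `V ⊆ B(0,1)` with `f 0 = 0`. Then for every `r > 0`
smaller than `r* = min{|f x| : |x| = 1/2, Re x ≥ 0}` there is a connected subset (arc)
`σ_r` of `V ∩ ∂B(0,r)` meeting both the image of the lower radius
`{-t·e₂ : 0 < t < 1}` and the image of the upper radius `{t·e₂ : 0 < t < 1}`;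
otherwise the connected component of `V ∩ B(0,r)` whose boundary contains the origin
would have to meet the arc `{e^{iθ}/2 : |θ| ≤ π/2}`, which is impossible. -/
theorem stmt17 (f : ℂ → ℂ) (V : Set ℂ)
    (hV : V = f '' halfDisk) (hVball : V ⊆ Metric.ball (0 : ℂ) 1)
    (hf0 : f 0 = 0)
    (hhomeo : ∃ φ : halfDisk ≃ₜ V, ∀ x : halfDisk, (φ x : ℂ) = f (x : ℂ))
    (r : ℝ) (hr : 0 < r)
    (hrstar : ∀ x : ℂ, ‖x‖ = 1 / 2 → 0 ≤ x.re → r < ‖f x‖) :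
    ∃ σ : Set ℂ, σ ⊆ V ∩ Metric.sphere (0 : ℂ) r ∧ IsConnected σ ∧
      (σ ∩ f '' lowerRadius).Nonempty ∧ (σ ∩ f '' upperRadius).Nonempty := by
  obtain ⟨φ, hφ⟩ := hhomeo
  -- f is continuous on the half-disk
  have hfc : ContinuousOn f halfDisk := by
    rw [continuousOn_iff_continuous_restrict]
    have hcont : Continuous fun x : halfDisk => ((φ x : V) : ℂ) :=
      continuous_subtype_val.comp φ.continuous
    convert hcont using 1
    funext x
    exact (hφ x).symm
  have h0mem : (0:ℂ) ∈ halfDisk := by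
    constructor <;> simp [halfDisk]
  -- choose δ
  have hcwa : ContinuousWithinAt f halfDisk 0 := hfc 0 h0mem
  obtain ⟨δ', hδ'pos, hδ'⟩ := Metric.continuousWithinAt_iff.1 hcwa r hr
  set δ : ℝ := min (δ'/2) (1/4) with hδdef
  have hδpos : 0 < δ := lt_min (half_pos hδ'pos) (by norm_num)
  have hδlt : δ < δ' := lt_of_le_of_lt (min_le_left _ _) (half_lt_self hδ'pos)
  have hδle : δ ≤ 1/4 := min_le_right _ _
  -- the chart of the truncated half-annulus
  set c : ℝ → ℝ := fun t => max 0 (min 1 t) with hcdef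
  have hc01 : ∀ t, c t ∈ Icc (0:ℝ) 1 := by
    intro t
    constructor
    · exact le_max_left _ _
    · exact max_le zero_le_one (min_le_left _ _)
  have hcid : ∀ t ∈ Icc (0:ℝ) 1, c t = t := by
    intro t ht
    simp only [hcdef]
    rw [min_eq_right ht.2, max_eq_right ht.1]
  have hccont : Continuous c := continuous_const.max (continuous_const.min continuous_id)
  set rad : ℝ → ℝ := fun s => δ + (c s) * (1/2 - δ) with hraddef
  have hrad_mem : ∀ s, rad s ∈ Icc δ (1/2) := by
    intro s
    have h1 := (hc01 s).1
    have h2 := (hc01 s).2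
    constructor
    · simp only [hraddef]; nlinarith
    · simp only [hraddef]; nlinarith
  have hradpos : ∀ s, 0 < rad s := fun s => lt_of_lt_of_le hδpos (hrad_mem s).1
  have hradcont : Continuous rad :=
    continuous_const.add ((hccont).mul continuous_const)
  set ang : ℝ → ℝ := fun t => π * (c t - 1/2) with hangdef
  have hang_mem : ∀ t, ang t ∈ Icc (-(π/2)) (π/2) := by
    intro t
    have h1 := (hc01 t).1
    have h2 := (hc01 t).2
    have hπ := Real.pi_pos
    constructor
    · simp only [hangdef]; nlinarith
    · simp only [hangdef]; nlinarith
  have hangcont : Continuous ang := continuous_const.mul (hccont.sub continuous_const)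
  set Φ : ℝ×ℝ → ℂ := fun p => (rad p.1 : ℂ) * Complex.exp ((ang p.2 : ℝ) * Complex.I)
    with hΦdef
  have habs : ∀ p, ‖Φ p‖ = rad p.1 := by
    intro p
    simp only [hΦdef, norm_mul, Complex.norm_real, Real.norm_eq_abs, Complex.norm_exp_ofReal_mul_I, mul_one]
    exact abs_of_pos (hradpos _)
  have hre : ∀ p, (Φ p).re = rad p.1 * Real.cos (ang p.2) := by
    intro p
    simp only [hΦdef, Complex.re_ofReal_mul, Complex.exp_ofReal_mul_I_re]
  have hΦmem : ∀ p, Φ p ∈ halfDisk := by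
    intro p
    constructor
    · rw [habs]
      exact lt_of_le_of_lt (hrad_mem _).2 (by norm_num)
    · rw [hre]
      apply mul_nonneg (hradpos _).le
      exact Real.cos_nonneg_of_mem_Icc (hang_mem _)
  have hΦcont : Continuous Φ := by
    apply Continuous.mul
    · exact Complex.continuous_ofReal.comp (hradcont.comp continuous_fst)
    · exact Complex.continuous_exp.comp
        ((Complex.continuous_ofReal.comp (hangcont.comp continuous_snd)).mul
          continuous_const)
  set h : ℝ×ℝ → ℝ := fun p => ‖f (Φ p)‖ with hhdef
  have hhcont : Continuous h :=
    continuous_norm.comp (hfc.comp_continuous hΦcont hΦmem)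
  -- boundary conditions
  have hleft : ∀ y ∈ Icc (0:ℝ) 1, h (0, y) < r := by
    intro y hy
    have hc0 : c 0 = 0 := by simp [hcdef]
    have hr0 : rad 0 = δ := by simp [hraddef, hc0]
    have habs0 : ‖Φ (0, y)‖ = δ := by rw [habs]; exact hr0
    have hdist : dist (Φ (0, y)) 0 < δ' := by
      rw [Complex.dist_eq, sub_zero, habs0]
      exact hδlt
    have := hδ' (hΦmem (0, y)) hdist
    rwa [hf0, Complex.dist_eq, sub_zero] at this
  have hright : ∀ y ∈ Icc (0:ℝ) 1, r < h (1, y) := by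
    intro y hy
    have hc1 : c 1 = 1 := hcid 1 ⟨zero_le_one, le_refl 1⟩
    have hr1 : rad 1 = 1/2 := by simp [hraddef, hc1]
    apply hrstar
    · rw [habs]; exact hr1
    · rw [hre]
      apply mul_nonneg (hradpos _).le
      exact Real.cos_nonneg_of_mem_Icc (hang_mem _)
  -- the crossing continuum
  obtain ⟨E, hESq, hElevel, hEconn, ⟨p₀, hp₀E, hp₀⟩, ⟨p₁, hp₁E, hp₁⟩⟩ :=
    st17_cross h r hhcont hleft hright
  -- exponential values on the two radii
  have hexp : ∀ t : ℝ, Complex.exp ((t : ℂ) * Complex.I)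
      = (Real.cos t : ℂ) + (Real.sin t : ℂ) * Complex.I := by
    intro t
    rw [Complex.exp_mul_I]
    norm_cast
  have hang0 : ∀ p : ℝ×ℝ, p.2 = 0 → Φ p = -((rad p.1 : ℝ) : ℂ) * Complex.I := by
    intro p hp2
    have ha : ang p.2 = -(π/2) := by
      rw [hp2]
      have : c 0 = 0 := by simp [hcdef]
      simp only [hangdef, this]
      ring
    simp only [hΦdef, ha, hexp]
    simp [Real.cos_pi_div_two, Real.sin_pi_div_two, Real.cos_neg, Real.sin_neg]
  have hang1 : ∀ p : ℝ×ℝ, p.2 = 1 → Φ p = ((rad p.1 : ℝ) : ℂ) * Complex.I := by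
    intro p hp2
    have ha : ang p.2 = π/2 := by
      rw [hp2]
      have : c 1 = 1 := hcid 1 ⟨zero_le_one, le_refl 1⟩
      simp only [hangdef, this]
      ring
    simp only [hΦdef, ha, hexp]
    simp [Real.cos_pi_div_two, Real.sin_pi_div_two]
  have hradlt1 : ∀ s, rad s < 1 := fun s => lt_of_le_of_lt (hrad_mem s).2 (by norm_num)
  -- assemble σ
  refine ⟨f '' (Φ '' E), ?_, ?_, ?_, ?_⟩
  · rintro x ⟨z, ⟨p, hpE, rfl⟩, rfl⟩
    constructor
    · rw [hV]
      exact ⟨Φ p, hΦmem p, rfl⟩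
    · rw [Metric.mem_sphere, Complex.dist_eq, sub_zero]
      exact hElevel p hpE
  · have h1 : IsConnected (Φ '' E) := hEconn.image Φ hΦcont.continuousOn
    apply h1.image
    apply hfc.mono
    rintro z ⟨p, hpE, rfl⟩
    exact hΦmem p
  · refine ⟨f (Φ p₀), ⟨Φ p₀, ⟨p₀, hp₀E, rfl⟩, rfl⟩, ⟨Φ p₀, ?_, rfl⟩⟩
    exact ⟨rad p₀.1, hradpos _, hradlt1 _, by rw [hang0 p₀ hp₀]⟩
  · refine ⟨f (Φ p₁), ⟨Φ p₁, ⟨p₁, hp₁E, rfl⟩, rfl⟩, ⟨Φ p₁, ?_, rfl⟩⟩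
    exact ⟨rad p₁.1, hradpos _, hradlt1 _, by rw [hang1 p₁ hp₁]⟩
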